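/- Over the alphabet {r,s} with r < s, every nonempty C∞-word w has at least 2r² and at most 2s² primitives, where a primitive of w is a word v with D(v) = w. -/

import Mathlib

namespace Kola

/-- Run-length encoding of a finite word as (letter, count) pairs. -/
def rle : List ℕ → List (ℕ × ℕ)
  | [] => []
  | a :: l =>
    match rle l with
    | [] => [(a, 1)]
    | (b, n) :: t => if a = b then (b, n + 1) :: t else (a, 1) :: (b, n) :: t

/-- Boundary adjustment for the first run: discard if length ≤ r, extend to s if length in (r,s]. -/
def fixRun (r s : ℕ) : List (ℕ × ℕ) → List (ℕ × ℕ)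
  | [] => []
  | (a, n) :: t => if n ≤ r then t else if n ≤ s then (a, s) :: t else (a, n) :: t

/-- The Kolakoski derivative over the alphabet {r,s}. -/
def D (r s : ℕ) (w : List ℕ) : List ℕ :=
  match rle w with
  | [] => []
  | [(_, n)] => if n < s then [] else [n]
  | ps => ((fixRun r s ((fixRun r s ps).reverse)).reverse).map Prod.snd

/-- A C∞-word over {r,s}: all iterated derivatives are words over {r,s}. -/
def IsCInf (r s : ℕ) (w : List ℕ) : Prop :=
  ∀ k : ℕ, ∀ a ∈ (D r s)^[k] w, a = r ∨ a = s

/-- `t` enumerates the starting indices of the (maximal) runs of the sequence `z`. -/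
def IsRunPartition (z : ℕ → ℕ) (t : ℕ → ℕ) : Prop :=
  t 0 = 0 ∧ StrictMono t ∧
  (∀ k i, t k ≤ i → i < t (k + 1) → z i = z (t k)) ∧
  (∀ k, z (t (k + 1)) ≠ z (t k))

/-- `w` is the run-length sequence of `z`. -/
def IsRunLengthSeq (z w : ℕ → ℕ) : Prop :=
  ∃ t, IsRunPartition z t ∧ ∀ k, w k = t (k + 1) - t k

/-- A Kolakoski sequence over {r,s}: a sequence over {r,s} equal to its own run-length sequence. -/
def IsKolakoski (r s : ℕ) (z : ℕ → ℕ) : Prop :=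
  (∀ n, z n = r ∨ z n = s) ∧ IsRunLengthSeq z z

def EventuallyPeriodic (z : ℕ → ℕ) : Prop :=
  ∃ m q : ℕ, 1 ≤ q ∧ ∀ i, m ≤ i → z (i + q) = z i

/-- `w` occurs as a factor of the infinite sequence `z`. -/
def FactorOf (w : List ℕ) (z : ℕ → ℕ) : Prop :=
  ∃ i, w = (List.range w.length).map fun k => z (i + k)

/-- Letter-exchange on words over {r,s}. -/
def exch (r s : ℕ) (w : List ℕ) : List ℕ := w.map fun a => if a = r then s else r

/-- Number of occurrences of `w` as a factor of the prefix of length `n` of `z`. -/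
def countOcc (z : ℕ → ℕ) (w : List ℕ) (n : ℕ) : ℕ :=
  ((Finset.range n).filter fun i => i + w.length ≤ n ∧ ∀ k < w.length, z (i + k) = w.getD k 0).card

/-- All words of length n over {r,s}. -/
def allWords (r s : ℕ) : ℕ → Finset (List ℕ)
  | 0 => {[]}
  | n + 1 => (allWords r s n).image (List.cons r) ∪ (allWords r s n).image (List.cons s)


def unrle : List (ℕ × ℕ) → List ℕ
  | [] => []
  | (a, n) :: t => List.replicate n a ++ unrle t

lemma rle_nil_iff (l : List ℕ) : rle l = [] ↔ l = [] := by
  constructor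
  · intro h
    cases l with
    | nil => rfl
    | cons a t =>
      rw [rle] at h
      rcases h' : rle t with _ | ⟨⟨b,n⟩, u⟩ <;> simp [h'] at h
      split at h <;> simp at h
  · rintro rfl; rfl

lemma unrle_rle (l : List ℕ) : unrle (rle l) = l := by
  induction l with
  | nil => rfl
  | cons a t ih =>
    rw [rle]
    rcases h' : rle t with _ | ⟨⟨b,n⟩, u⟩
    · simp [h'] at ih
      simp [unrle, ih, (rle_nil_iff t).mp h']
    · rw [h'] at ih
      by_cases hab : a = b
      · subst hab
        simp only [if_pos rfl, if_true]
        have e1 : unrle ((a, n + 1) :: u) = List.replicate (n+1) a ++ unrle u := rfl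
        have e2 : List.replicate n a ++ unrle u = t := by
          have h3 : unrle ((a, n) :: u) = List.replicate n a ++ unrle u := rfl
          rwa [h3] at ih
        rw [e1, List.replicate_succ]
        simp [e2]
      · simp only [if_neg hab]
        rw [unrle, ih]
        simp [List.replicate]

lemma rle_pos (l : List ℕ) : ∀ p ∈ rle l, 1 ≤ p.2 := by
  induction l with
  | nil => simp [rle]
  | cons a t ih =>
    rw [rle]
    rcases h' : rle t with _ | ⟨⟨b,n⟩, u⟩
    · simp
    · rw [h'] at ih
      by_cases hab : a = b
      · simp only [if_pos hab]
        intro p hp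
        rcases List.mem_cons.mp hp with rfl | hp
        · simp
        · exact ih p (List.mem_cons_of_mem _ hp)
      · simp only [if_neg hab]
        intro p hp
        rcases List.mem_cons.mp hp with rfl | hp
        · simp
        · exact ih p hp

lemma rle_letters (l : List ℕ) : ∀ p ∈ rle l, p.1 ∈ l := by
  induction l with
  | nil => simp [rle]
  | cons a t ih =>
    rw [rle]
    rcases h' : rle t with _ | ⟨⟨b,n⟩, u⟩
    · simp
    · rw [h'] at ih
      by_cases hab : a = b
      · simp only [if_pos hab]
        intro p hp
        rcases List.mem_cons.mp hp with rfl | hp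
        · simp [hab]
        · exact List.mem_cons_of_mem _ (ih p (List.mem_cons_of_mem _ hp))
      · simp only [if_neg hab]
        intro p hp
        rcases List.mem_cons.mp hp with rfl | hp
        · simp
        · exact List.mem_cons_of_mem _ (ih p hp)

lemma rle_chain (l : List ℕ) : (rle l).IsChain (fun p q => p.1 ≠ q.1) := by
  induction l with
  | nil => simp [rle]
  | cons a t ih =>
    rw [rle]
    rcases h' : rle t with _ | ⟨⟨b,n⟩, u⟩
    · simp
    · rw [h'] at ih
      by_cases hab : a = b
      · simp only [if_pos hab]
        cases u with
        | nil => simp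
        | cons q u' =>
          rw [List.isChain_cons_cons] at ih ⊢
          exact ⟨ih.1, ih.2⟩
      · simp only [if_neg hab]
        exact List.IsChain.cons_cons (by simpa using hab) ih

lemma rle_replicate_append (a n : ℕ) (u : List ℕ) (hn : 1 ≤ n)
    (h : ∀ b m t, rle u = (b, m) :: t → b ≠ a) :
    rle (List.replicate n a ++ u) = (a, n) :: rle u := by
  induction n with
  | zero => omega
  | succ n ih =>
    rcases Nat.eq_or_lt_of_le hn with h1 | h1
    · -- n + 1 = 1, n = 0
      have hn0 : n = 0 := by omega
      subst hn0
      simp only [zero_add, List.replicate_one, List.singleton_append]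
      rw [rle]
      rcases h' : rle u with _ | ⟨⟨b,m⟩, t⟩
      · rfl
      · have := h b m t h'
        simp [Ne.symm this]
    · have hn' : 1 ≤ n := by omega
      rw [List.replicate_succ, List.cons_append, rle, ih hn']
      simp

lemma rle_unrle (ps : List (ℕ × ℕ)) (hc : ps.IsChain (fun p q => p.1 ≠ q.1))
    (hp : ∀ p ∈ ps, 1 ≤ p.2) : rle (unrle ps) = ps := by
  induction ps with
  | nil => rfl
  | cons p t ih =>
    obtain ⟨a, n⟩ := p
    have e1 : unrle ((a, n) :: t) = List.replicate n a ++ unrle t := rfl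
    rw [e1]
    have ht : rle (unrle t) = t := ih hc.tail (fun q hq => hp q (List.mem_cons_of_mem _ hq))
    rw [rle_replicate_append a n (unrle t) (hp (a,n) (List.mem_cons_self))]
    · rw [ht]
    · intro b m t' hbt
      rw [ht] at hbt
      subst hbt
      have := List.isChain_cons_cons.mp hc
      exact (this.1).symm

def alt (r s a : ℕ) : ℕ := if a = r then s else r

def runsFrom (r s a : ℕ) : List ℕ → List (ℕ × ℕ)
  | [] => []
  | n :: t => (a, n) :: runsFrom r s (alt r s a) t

lemma runsFrom_map_snd (r s a : ℕ) (L : List ℕ) : (runsFrom r s a L).map Prod.snd = L := by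
  induction L generalizing a with
  | nil => rfl
  | cons n t ih => rw [runsFrom]; simp [ih]

lemma alt_mem (r s a : ℕ) : alt r s a = r ∨ alt r s a = s := by
  unfold alt; split <;> simp

lemma alt_ne (r s a : ℕ) (hrs : r ≠ s) (ha : a = r ∨ a = s) : alt r s a ≠ a := by
  unfold alt; rcases ha with rfl | rfl <;> simp [hrs, Ne.symm hrs]

lemma runsFrom_letters (r s a : ℕ) (ha : a = r ∨ a = s) (L : List ℕ) :
    ∀ p ∈ runsFrom r s a L, p.1 = r ∨ p.1 = s := by
  induction L generalizing a with
  | nil => simp [runsFrom]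
  | cons n t ih =>
    rw [runsFrom]
    intro p hp
    rcases List.mem_cons.mp hp with rfl | hp
    · exact ha
    · exact ih (alt r s a) (alt_mem r s a) p hp

lemma runsFrom_chain (r s a : ℕ) (hrs : r ≠ s) (ha : a = r ∨ a = s) (L : List ℕ) :
    (runsFrom r s a L).IsChain (fun p q => p.1 ≠ q.1) := by
  induction L generalizing a with
  | nil => simp [runsFrom]
  | cons n t ih =>
    rw [runsFrom]
    rcases t with _ | ⟨m, t'⟩
    · simp [runsFrom]
    · rw [runsFrom]
      refine List.IsChain.cons_cons ?_ ?_
      · exact Ne.symm (alt_ne r s a hrs ha)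
      · have := ih (alt r s a) (alt_mem r s a)
        rwa [runsFrom] at this

lemma runsFrom_pos (r s a : ℕ) (L : List ℕ) (hL : ∀ n ∈ L, 1 ≤ n) :
    ∀ p ∈ runsFrom r s a L, 1 ≤ p.2 := by
  induction L generalizing a with
  | nil => simp [runsFrom]
  | cons n t ih =>
    rw [runsFrom]
    intro p hp
    rcases List.mem_cons.mp hp with rfl | hp
    · exact hL n (List.mem_cons_self)
    · exact ih (alt r s a) (fun m hm => hL m (List.mem_cons_of_mem _ hm)) p hp

lemma unrle_letters (ps : List (ℕ × ℕ)) : ∀ a ∈ unrle ps, ∃ p ∈ ps, a = p.1 := by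
  induction ps with
  | nil => simp [unrle]
  | cons p t ih =>
    obtain ⟨b, n⟩ := p
    have e1 : unrle ((b, n) :: t) = List.replicate n b ++ unrle t := rfl
    rw [e1]
    intro a ha
    rcases List.mem_append.mp ha with h | h
    · exact ⟨(b,n), List.mem_cons_self, List.eq_of_mem_replicate h⟩
    · obtain ⟨q, hq, he⟩ := ih a h
      exact ⟨q, List.mem_cons_of_mem _ hq, he⟩

/-- letters are determined by alternation -/
lemma eq_runsFrom (r s : ℕ) (hrs : r ≠ s) (ps : List (ℕ × ℕ))
    (hl : ∀ p ∈ ps, p.1 = r ∨ p.1 = s) (hc : ps.IsChain (fun p q => p.1 ≠ q.1)) :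
    ps = runsFrom r s ((ps.headD (0,0)).1) (ps.map Prod.snd) := by
  induction ps with
  | nil => rfl
  | cons p t ih =>
    obtain ⟨a, n⟩ := p
    simp only [List.headD_cons, List.map_cons]
    rw [runsFrom]
    rcases t with _ | ⟨⟨b, m⟩, t'⟩
    · rfl
    · have hb : b = alt r s a := by
        have hba : b ≠ a := ((List.isChain_cons_cons.mp hc).1).symm
        have hbm : b = r ∨ b = s := by
          have := hl (b, m) (List.mem_cons_of_mem _ (List.mem_cons_self))
          exact this
        have ham : a = r ∨ a = s := hl (a, n) (List.mem_cons_self)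
        unfold alt
        rcases ham with rfl | rfl
        · simp only [if_pos rfl]
          rcases hbm with rfl | rfl
          · exact absurd rfl hba
          · rfl
        · rw [if_neg (Ne.symm hrs)]
          rcases hbm with rfl | rfl
          · rfl
          · exact absurd rfl hba
      have := ih (fun q hq => hl q (List.mem_cons_of_mem _ hq)) hc.tail
      simp only [List.headD_cons] at this
      rw [List.cons_inj_right]
      rw [← hb]
      exact this

def eFix (r s : ℕ) (p : ℕ × ℕ) : List (ℕ × ℕ) :=
  if p.2 ≤ r then [] else if p.2 ≤ s then [(p.1, s)] else [p]

lemma fixRun_cons (r s : ℕ) (p : ℕ × ℕ) (t : List (ℕ × ℕ)) :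
    fixRun r s (p :: t) = eFix r s p ++ t := by
  obtain ⟨a, n⟩ := p
  rw [fixRun, eFix]
  split_ifs <;> simp

lemma eFix_reverse (r s : ℕ) (p : ℕ × ℕ) : (eFix r s p).reverse = eFix r s p := by
  rw [eFix]; split_ifs <;> simp

lemma D_nil_rle (r s : ℕ) (v : List ℕ) (h : rle v = []) : D r s v = [] := by
  rw [D, h]

lemma D_single (r s : ℕ) (v : List ℕ) (a n : ℕ) (h : rle v = [(a, n)]) :
    D r s v = if n < s then [] else [n] := by
  rw [D, h]

lemma D_eq_of (r s : ℕ) (v : List ℕ) (p q : ℕ × ℕ) (t : List (ℕ × ℕ))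
    (h : rle v = p :: q :: t) :
    D r s v = ((fixRun r s ((fixRun r s (p :: q :: t)).reverse)).reverse).map Prod.snd := by
  obtain ⟨a, n⟩ := p
  obtain ⟨b, m⟩ := q
  rw [D, h]

lemma D_formula (r s : ℕ) (v : List ℕ) (p l : ℕ × ℕ) (mid : List (ℕ × ℕ))
    (h : rle v = p :: (mid ++ [l])) :
    D r s v = (eFix r s p).map Prod.snd ++ mid.map Prod.snd ++ (eFix r s l).map Prod.snd := by
  obtain ⟨q, t, he⟩ : ∃ q t, mid ++ [l] = q :: t := by
    cases mid with
    | nil => exact ⟨l, [], rfl⟩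
    | cons x xs => exact ⟨x, xs ++ [l], rfl⟩
  rw [D_eq_of r s v p q t (by rw [h, he]), ← he, fixRun_cons]
  have h1 : (eFix r s p ++ (mid ++ [l])).reverse = l :: (eFix r s p ++ mid).reverse := by
    simp
  rw [h1, fixRun_cons]
  have h2 : (eFix r s l ++ (eFix r s p ++ mid).reverse).reverse
      = (eFix r s p ++ mid) ++ (eFix r s l).reverse := by simp
  rw [h2, eFix_reverse]
  simp

def Ee (r s n : ℕ) : List ℕ := if n ≤ r then [] else [s]

lemma eFix_map_snd (r s : ℕ) (p : ℕ × ℕ) (h : p.2 ≤ s) :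
    (eFix r s p).map Prod.snd = Ee r s p.2 := by
  rw [eFix, Ee]
  split_ifs <;> simp

lemma runsFrom_concat (r s a q : ℕ) (u : List ℕ) :
    runsFrom r s a (u ++ [q]) = runsFrom r s a u ++ [(u.foldl (fun c _ => alt r s c) a, q)] := by
  induction u generalizing a with
  | nil => rfl
  | cons n t ih =>
    rw [List.cons_append, runsFrom, runsFrom, ih]
    simp

lemma structure_lemma (r s : ℕ) (hr : 0 < r) (hrs : r < s) (v w : List ℕ)
    (hv : ∀ a ∈ v, a = r ∨ a = s) (hD : D r s v = w) (hw : w ≠ [])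
    (hwl : ∀ a ∈ w, a = r ∨ a = s) :
    (rle v = [(((rle v).headD (0,0)).1, s)] ∧ w = [s]) ∨
    (∃ body, rle v = runsFrom r s ((rle v).headD (0,0)).1
        (((rle v).headD (0,0)).2 :: (body ++ [((rle v).getLastD (0,0)).2])) ∧
      w = Ee r s ((rle v).headD (0,0)).2 ++ body ++ Ee r s ((rle v).getLastD (0,0)).2 ∧
      ((rle v).headD (0,0)).2 ≤ s ∧ ((rle v).getLastD (0,0)).2 ≤ s) := by
  rcases hrv : rle v with _ | ⟨⟨a, n⟩, u⟩
  · rw [D_nil_rle r s v hrv] at hD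
    exact absurd hD.symm hw
  rcases u with _ | ⟨q, t⟩
  · -- single run
    left
    have hD1 := D_single r s v a n hrv
    rw [hD] at hD1
    by_cases hns : n < s
    · rw [if_pos hns] at hD1; exact absurd hD1 hw
    · rw [if_neg hns] at hD1
      have hn : n = r ∨ n = s := hwl n (by rw [hD1]; exact List.mem_singleton_self _)
      have hns2 : n = s := by omega
      exact ⟨by simp [hns2], by rw [hD1, hns2]⟩
  · -- at least two runs
    right
    have hune : q :: t ≠ [] := by simp
    set l := (q :: t).getLast hune with hl
    set mid := (q :: t).dropLast with hmid
    have hsplit : q :: t = mid ++ [l] := (List.dropLast_append_getLast hune).symm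
    have hrv2 : rle v = (a, n) :: (mid ++ [l]) := by rw [hrv, hsplit]
    have hDf := D_formula r s v (a, n) l mid hrv2
    rw [hD] at hDf
    have hgl : ((a, n) :: q :: t).getLastD (0, 0) = l := by
      rw [show (a, n) :: q :: t = ((a, n) :: mid) ++ [l] from by
        rw [List.cons_append, ← hsplit], List.getLastD_concat]
    have hn_le : n ≤ s := by
      by_contra hns
      have h1 : eFix r s (a, n) = [(a, n)] := by
        rw [eFix]; rw [if_neg (by simp; omega), if_neg (by simp; omega)]
      have hmem : n ∈ w := by rw [hDf, h1]; simp
      rcases hwl n hmem with h | h <;> omega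
    have hl_le : l.2 ≤ s := by
      by_contra hls
      have h1 : eFix r s l = [l] := by
        rw [eFix]; rw [if_neg (by omega), if_neg (by omega)]
      have hmem : l.2 ∈ w := by rw [hDf, h1]; simp
      rcases hwl l.2 hmem with h | h <;> omega
    refine ⟨mid.map Prod.snd, ?_, ?_, ?_, ?_⟩
    · have halt := eq_runsFrom r s (by omega) ((a, n) :: q :: t)
        (fun p hp => hv p.1 (rle_letters v p (by rw [hrv]; exact hp)))
        (hrv ▸ rle_chain v)
      have hmap : List.map Prod.snd ((a, n) :: q :: t)
          = n :: (mid.map Prod.snd ++ [l.2]) := by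
        rw [show (a,n) :: q :: t = (a,n) :: (mid ++ [l]) from by rw [← hsplit]]
        simp
      rw [hmap, List.headD_cons] at halt
      simp only [List.headD_cons, hgl]
      exact halt
    · simp only [List.headD_cons, hgl]
      rw [hDf, eFix_map_snd r s (a, n) hn_le, eFix_map_snd r s l hl_le]
    · simp only [List.headD_cons]; exact hn_le
    · simp only [hgl]; exact hl_le


/-- Every nonempty C∞-word over {r,s} has at least 2r² and at most 2s²
primitives. -/
theorem primitives_count (r s : ℕ) (hr : 0 < r) (hrs : r < s)
    (w : List ℕ) (hw : w ≠ []) (hc : IsCInf r s w) :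
    2 * r ^ 2 ≤ {v : List ℕ | (∀ a ∈ v, a = r ∨ a = s) ∧ D r s v = w}.ncard ∧
    {v : List ℕ | (∀ a ∈ v, a = r ∨ a = s) ∧ D r s v = w}.ncard ≤ 2 * s ^ 2 := by
  have hwl : ∀ a ∈ w, a = r ∨ a = s := by simpa using hc 0
  set P : Set (List ℕ) := {v : List ℕ | (∀ a ∈ v, a = r ∨ a = s) ∧ D r s v = w} with hP
  set T : List ℕ → ℕ × ℕ × ℕ :=
    fun v => (((rle v).headD (0,0)).1, ((rle v).headD (0,0)).2, ((rle v).getLastD (0,0)).2)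
    with hT
  have hEs : Ee r s s = [s] := by rw [Ee, if_neg (by omega)]
  -- injectivity
  have hinj : Set.InjOn T P := by
    rintro v₁ ⟨hv₁, hD₁⟩ v₂ ⟨hv₂, hD₂⟩ hTe
    have hS₁ := structure_lemma r s hr hrs v₁ w hv₁ hD₁ hw hwl
    have hS₂ := structure_lemma r s hr hrs v₂ w hv₂ hD₂ hw hwl
    have he1 : ((rle v₁).headD (0,0)).1 = ((rle v₂).headD (0,0)).1 := congrArg (·.1) hTe
    have he2 : ((rle v₁).headD (0,0)).2 = ((rle v₂).headD (0,0)).2 := congrArg (·.2.1) hTe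
    have he3 : ((rle v₁).getLastD (0,0)).2 = ((rle v₂).getLastD (0,0)).2 := congrArg (·.2.2) hTe
    rcases hS₁ with ⟨ha₁, hwa₁⟩ | ⟨b₁, hb₁, hwb₁, hn₁, hm₁⟩ <;>
      rcases hS₂ with ⟨ha₂, hwa₂⟩ | ⟨b₂, hb₂, hwb₂, hn₂, hm₂⟩
    · rw [← unrle_rle v₁, ← unrle_rle v₂, ha₁, ha₂, he1]
    · exfalso
      have hh2 : ((rle v₁).headD (0,0)).2 = s := by rw [ha₁]; rfl
      have hEn : ((rle v₂).headD (0,0)).2 = s := by omega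
      have hgl : ((rle v₂).getLastD (0,0)).2 = s := by
        have : ((rle v₁).getLastD (0,0)).2 = s := by rw [ha₁]; rfl
        omega
      rw [hEn, hgl, hEs] at hwb₂
      rw [hwa₁] at hwb₂
      have := congrArg List.length hwb₂
      simp at this
    · exfalso
      have hh2 : ((rle v₂).headD (0,0)).2 = s := by rw [ha₂]; rfl
      have hEn : ((rle v₁).headD (0,0)).2 = s := by omega
      have hgl : ((rle v₁).getLastD (0,0)).2 = s := by
        have : ((rle v₂).getLastD (0,0)).2 = s := by rw [ha₂]; rfl
        omega
      rw [hEn, hgl, hEs] at hwb₁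
      rw [hwa₂] at hwb₁
      have := congrArg List.length hwb₁
      simp at this
    · -- both multi
      rw [he2, he3] at hwb₁
      rw [hwb₁] at hwb₂
      have hbb : b₁ = b₂ := by
        rw [List.append_assoc, List.append_assoc] at hwb₂
        have h5 := List.append_cancel_left hwb₂
        exact List.append_cancel_right h5
      rw [← unrle_rle v₁, ← unrle_rle v₂, hb₁, hb₂, he1, he2, he3, hbb]
  -- maps to
  set S : Finset (ℕ × ℕ × ℕ) := ({r, s} : Finset ℕ) ×ˢ (Finset.Icc 1 s ×ˢ Finset.Icc 1 s)
    with hSdef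
  have hmaps : Set.MapsTo T P ↑S := by
    rintro v ⟨hv, hD⟩
    have hS₁ := structure_lemma r s hr hrs v w hv hD hw hwl
    set A := ((rle v).headD (0,0)).1 with hA
    set N := ((rle v).headD (0,0)).2 with hN
    set M := ((rle v).getLastD (0,0)).2 with hM
    have key : (A = r ∨ A = s) ∧ 1 ≤ N ∧ N ≤ s ∧ 1 ≤ M ∧ M ≤ s := by
      rcases hS₁ with ⟨ha, hwa⟩ | ⟨b, hb, hwb, hn, hm⟩
      · have hNs : N = s := by rw [hN, ha]; rfl
        have hMs : M = s := by rw [hM, ha]; rfl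
        have hmem : (A, s) ∈ rle v := by rw [ha]; simp
        exact ⟨hv A (rle_letters v (A, s) hmem), by omega, by omega, by omega, by omega⟩
      · have hsh : rle v = (A, N) :: runsFrom r s (alt r s A) (b ++ [M]) := by
          rw [hb, runsFrom]
        have hmem1 : (A, N) ∈ rle v := by rw [hsh]; exact List.mem_cons_self
        have hmem2 : (b.foldl (fun c _ => alt r s c) (alt r s A), M) ∈ rle v := by
          rw [hb]
          rw [show (N :: (b ++ [M])) = ((N :: b) ++ [M]) from rfl]
          rw [runsFrom_concat]
          simp
        refine ⟨hv A (rle_letters v (A, N) hmem1), rle_pos v _ hmem1, hn, ?_, hm⟩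
        have := rle_pos v _ hmem2
        simpa using this
    simp only [hSdef, Finset.coe_product, Set.mem_prod, Finset.mem_coe, Finset.mem_insert,
      Finset.mem_singleton, Finset.mem_Icc]
    exact ⟨key.1, ⟨key.2.1, key.2.2.1⟩, ⟨key.2.2.2.1, key.2.2.2.2⟩⟩
  have hfin : P.Finite := by
    apply Set.Finite.of_finite_image _ hinj
    exact Set.Finite.subset S.finite_toSet (hmaps.image_subset)
  have hScard : S.card = 2 * s ^ 2 := by
    rw [hSdef, Finset.card_product, Finset.card_product]
    rw [Finset.card_insert_of_notMem (by simp [Nat.ne_of_lt hrs]), Finset.card_singleton]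
    rw [Nat.card_Icc, Nat.add_sub_cancel]
    ring
  have hupper : P.ncard ≤ 2 * s ^ 2 := by
    rw [← Set.ncard_image_of_injOn hinj]
    calc (T '' P).ncard ≤ (↑S : Set (ℕ × ℕ × ℕ)).ncard :=
          Set.ncard_le_ncard (hmaps.image_subset) S.finite_toSet
    _ = S.card := Set.ncard_coe_finset S
    _ = 2 * s ^ 2 := hScard
  -- lower bound
  set build : ℕ × ℕ × ℕ → List ℕ :=
    fun x => unrle (runsFrom r s x.1 (x.2.1 :: (w ++ [x.2.2]))) with hbuild
  set Q : Finset (ℕ × ℕ × ℕ) := ({r, s} : Finset ℕ) ×ˢ (Finset.Icc 1 r ×ˢ Finset.Icc 1 r)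
    with hQdef
  have hQmem : ∀ x ∈ Q, (x.1 = r ∨ x.1 = s) ∧ 1 ≤ x.2.1 ∧ x.2.1 ≤ r ∧ 1 ≤ x.2.2 ∧ x.2.2 ≤ r := by
    intro x hx
    simp only [hQdef, Finset.mem_product, Finset.mem_insert, Finset.mem_singleton,
      Finset.mem_Icc] at hx
    exact ⟨hx.1, hx.2.1.1, hx.2.1.2, hx.2.2.1, hx.2.2.2⟩
  have hbuild_rle : ∀ x ∈ Q, rle (build x) = runsFrom r s x.1 (x.2.1 :: (w ++ [x.2.2])) := by
    intro x hx
    obtain ⟨ha, h1, h2, h3, h4⟩ := hQmem x hx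
    apply rle_unrle
    · exact runsFrom_chain r s x.1 (Nat.ne_of_lt hrs) ha _
    · apply runsFrom_pos
      intro n hn
      rcases List.mem_cons.mp hn with rfl | hn
      · omega
      · rcases List.mem_append.mp hn with hn | hn
        · rcases hwl n hn with rfl | rfl <;> omega
        · rcases List.mem_singleton.mp hn with rfl; omega
  have hQP : ∀ x ∈ Q, build x ∈ P := by
    intro x hx
    obtain ⟨ha, h1, h2, h3, h4⟩ := hQmem x hx
    constructor
    · intro b hb
      obtain ⟨p, hp, rfl⟩ := unrle_letters _ b hb
      exact runsFrom_letters r s x.1 ha _ p hp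
    · have hsh : rle (build x) = (x.1, x.2.1) ::
          (runsFrom r s (alt r s x.1) w ++ [(w.foldl (fun c _ => alt r s c) (alt r s x.1), x.2.2)]) := by
        rw [hbuild_rle x hx, runsFrom, runsFrom_concat]
      rw [D_formula r s (build x) _ _ _ hsh]
      rw [show eFix r s (x.1, x.2.1) = [] from by rw [eFix]; exact if_pos (by simpa using h2)]
      rw [show eFix r s (w.foldl (fun c _ => alt r s c) (alt r s x.1), x.2.2) = [] from by
        rw [eFix]; exact if_pos (by simpa using h4)]
      simp [runsFrom_map_snd]
  have hQinj : Set.InjOn build ↑Q := by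
    intro x hx y hy he
    have hrx := hbuild_rle x hx
    have hry := hbuild_rle y hy
    rw [he, hry] at hrx
    have hmap := congrArg (List.map Prod.snd) hrx.symm
    rw [runsFrom_map_snd, runsFrom_map_snd] at hmap
    have hq : x.2.2 = y.2.2 := by
      have h5 := List.tail_eq_of_cons_eq hmap
      have h6 := List.append_cancel_left h5
      simpa using h6
    have hp : x.2.1 = y.2.1 := List.head_eq_of_cons_eq hmap
    have hahd : x.1 = y.1 := by
      have := congrArg (fun l => (l.headD (0,0)).1) hrx.symm
      rcases w with _ | ⟨c, w'⟩
      · exact absurd rfl hw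
      · simpa [runsFrom] using this
    exact Prod.ext hahd (Prod.ext hp hq)
  have hQcard : Q.card = 2 * r ^ 2 := by
    rw [hQdef, Finset.card_product, Finset.card_product]
    rw [Finset.card_insert_of_notMem (by simp [Nat.ne_of_lt hrs]), Finset.card_singleton]
    rw [Nat.card_Icc, Nat.add_sub_cancel]
    ring
  have hlower : 2 * r ^ 2 ≤ P.ncard := by
    have himg : build '' ↑Q ⊆ P := by
      rintro v ⟨x, hx, rfl⟩
      exact hQP x (by exact_mod_cast hx)
    calc 2 * r ^ 2 = Q.card := hQcard.symm
    _ = (↑Q : Set (ℕ × ℕ × ℕ)).ncard := (Set.ncard_coe_finset Q).symm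
    _ = (build '' ↑Q).ncard := (Set.ncard_image_of_injOn hQinj).symm
    _ ≤ P.ncard := Set.ncard_le_ncard himg hfin
  exact ⟨hlower, hupper⟩

end Kola
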